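/- If there exists a probability measure Q equivalent to P with dQ/dP ∈ L²(P) and E_Q(ε_i - b_i) = 0 for all i ≥ 1, then ∑_{i=1}^∞ b_i² < ∞. -/

import Mathlib

open MeasureTheory ProbabilityTheory Filter

theorem stmt10 {Ω : Type*} [MeasurableSpace Ω] (μ : Measure Ω) [IsProbabilityMeasure μ]
    (ε : ℕ → Ω → ℝ) (b : ℕ → ℝ)
    (hmeas : ∀ i, Measurable (ε i))
    (hindep : iIndepFun ε μ)
    (hL2 : ∀ i, MemLp (ε i) 2 μ)
    (hmean : ∀ i, ∫ ω, ε i ω ∂μ = 0)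
    (hvar : ∀ i, ∫ ω, (ε i ω) ^ 2 ∂μ = 1)
    (Q : Measure Ω) [IsProbabilityMeasure Q] (hQP : Q ≪ μ) (hPQ : μ ≪ Q)
    (hdens : MemLp (fun ω => (Q.rnDeriv μ ω).toReal) 2 μ)
    (hQε : ∀ i, ∫ ω, (ε i ω - b i) ∂Q = 0) :
    Summable (fun i => (b i) ^ 2) := by
  set g : Ω → ℝ := fun ω => (Q.rnDeriv μ ω).toReal with hg
  -- the L² elements
  set f : ℕ → Lp ℝ 2 μ := fun i => (hL2 i).toLp (ε i) with hf
  set x : Lp ℝ 2 μ := hdens.toLp g with hx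
  -- inner products in L² are integrals of products
  have hinner : ∀ (φ ψ : Ω → ℝ) (hφ : MemLp φ 2 μ) (hψ : MemLp ψ 2 μ),
      @inner ℝ _ _ (hφ.toLp φ) (hψ.toLp ψ) = ∫ ω, φ ω * ψ ω ∂μ := by
    intro φ ψ hφ hψ
    rw [MeasureTheory.L2.inner_def]
    apply integral_congr_ae
    filter_upwards [hφ.coeFn_toLp, hψ.coeFn_toLp] with ω h1 h2
    simp [h1, h2, RCLike.inner_apply, mul_comm]
  -- orthonormality of the ε's in L²
  have hON : Orthonormal ℝ f := by
    rw [orthonormal_iff_ite]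
    intro i j
    have h := hinner (ε i) (ε j) (hL2 i) (hL2 j)
    by_cases hij : i = j
    · subst hij
      simp only [if_pos rfl]
      rw [h]
      have : ∫ ω, ε i ω * ε i ω ∂μ = ∫ ω, (ε i ω) ^ 2 ∂μ := by
        apply integral_congr_ae; filter_upwards with ω; ring
      rw [this, hvar]
      simp
    · simp only [if_neg hij]
      rw [h]
      have hind : IndepFun (ε i) (ε j) μ := hindep.indepFun hij
      have := hind.integral_mul_eq_mul_integral (hmeas i).aestronglyMeasurable (hmeas j).aestronglyMeasurable
      simpa [Pi.mul_apply, hmean i, hmean j] using this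
  -- b i is the inner product ⟪f i, x⟫
  have hint : ∀ i, Integrable (fun ω => g ω * ε i ω) μ := by
    intro i
    have h := MeasureTheory.L2.integrable_inner (𝕜 := ℝ) (hdens.toLp g) ((hL2 i).toLp (ε i))
    apply h.congr
    filter_upwards [hdens.coeFn_toLp, (hL2 i).coeFn_toLp] with ω h1 h2
    simp [h1, h2, RCLike.inner_apply, mul_comm]
  have hbi : ∀ i, @inner ℝ _ _ (f i) x = b i := by
    intro i
    have h1 : @inner ℝ _ _ (f i) x = ∫ ω, ε i ω * g ω ∂μ := hinner (ε i) g (hL2 i) hdens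
    have h2 : ∫ ω, g ω * ε i ω ∂μ = ∫ ω, ε i ω ∂Q := by
      have := MeasureTheory.integral_rnDeriv_smul hQP (f := ε i)
      simpa [smul_eq_mul] using this
    have hiQ : Integrable (ε i) Q := by
      rw [← MeasureTheory.integrable_rnDeriv_smul_iff hQP]
      simpa [smul_eq_mul] using hint i
    have h3 : ∫ ω, (ε i ω - b i) ∂Q = ∫ ω, ε i ω ∂Q - b i := by
      rw [integral_sub hiQ (integrable_const _)]
      simp
    have h4 : ∫ ω, ε i ω ∂Q = b i := by
      have := hQε i
      rw [h3] at this
      linarith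
    rw [h1, ← h4, ← h2]
    apply integral_congr_ae
    filter_upwards with ω; ring
  -- Bessel's inequality
  have hB := hON.inner_products_summable (x := x)
  apply hB.congr
  intro i
  rw [hbi i]
  rw [Real.norm_eq_abs, sq_abs]
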